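/- Fix constants k ≥ t ≥ 2 and ε > 0. With probability tending to 1 as n → ∞, a random k-uniform CSP instance with m = n^{t/2−ε} constraints (each scope chosen independently uniformly from [n]^k) is (n^{ε/(t−2)}, k − t/2 + ε/2)-expanding. -/

import Mathlib

open Filter Finset

private lemma pow_le_exp_mul_factorial : ∀ r : ℕ, (r:ℝ)^r ≤ Real.exp 1 ^ r * (Nat.factorial r : ℝ) := by
  intro r
  induction r with
  | zero => simp
  | succ p ih =>
    rcases Nat.eq_zero_or_pos p with hp | hp
    · subst hp
      simpa using Real.one_le_exp (by norm_num : (0:ℝ) ≤ 1)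
    · have hppos : (0:ℝ) < p := by exact_mod_cast hp
      have h1 : ((p:ℝ)+1)^p = (p:ℝ)^p * (((p:ℝ)+1)/p)^p := by
        rw [← mul_pow]
        congr 1
        field_simp
      have h2 : (((p:ℝ)+1)/p)^p ≤ Real.exp 1 := by
        have hle : ((p:ℝ)+1)/p ≤ Real.exp (1/p) := by
          have := Real.add_one_le_exp (1/(p:ℝ))
          calc ((p:ℝ)+1)/p = 1/p + 1 := by field_simp; ring
          _ ≤ Real.exp (1/p) := this
        calc (((p:ℝ)+1)/p)^p ≤ Real.exp (1/(p:ℝ)) ^ p := by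
              apply pow_le_pow_left₀ (by positivity) hle
        _ = Real.exp ((p:ℕ) * (1/(p:ℝ))) := by rw [← Real.exp_nat_mul]
        _ = Real.exp 1 := by
              congr 1
              field_simp
      have h3 : ((p:ℝ)+1)^p ≤ Real.exp 1 ^ p * (Nat.factorial p : ℝ) * Real.exp 1 := by
        rw [h1]
        have hfac : (0:ℝ) < (((p:ℝ)+1)/p)^p := by positivity
        calc (p:ℝ)^p * (((p:ℝ)+1)/p)^p ≤ (Real.exp 1 ^ p * (Nat.factorial p : ℝ)) * (((p:ℝ)+1)/p)^p := by
              apply mul_le_mul_of_nonneg_right ih (le_of_lt hfac)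
        _ ≤ (Real.exp 1 ^ p * (Nat.factorial p : ℝ)) * Real.exp 1 := by
              apply mul_le_mul_of_nonneg_left h2 (by positivity)
        _ = Real.exp 1 ^ p * (Nat.factorial p : ℝ) * Real.exp 1 := rfl
      have : ((p:ℕ)+1 : ℝ)^(p+1) = ((p:ℝ)+1) * ((p:ℝ)+1)^p := by ring
      push_cast
      rw [this]
      calc ((p:ℝ)+1) * ((p:ℝ)+1)^p ≤ ((p:ℝ)+1) * (Real.exp 1 ^ p * (Nat.factorial p : ℝ) * Real.exp 1) := by
            apply mul_le_mul_of_nonneg_left h3 (by positivity)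
      _ = Real.exp 1 ^ (p+1) * (((p:ℝ)+1) * (Nat.factorial p : ℝ)) := by ring
      _ = Real.exp 1 ^ (p+1) * (Nat.factorial (p+1) : ℝ) := by
            rw [Nat.factorial_succ]
            push_cast
            ring

private lemma geom_sum_half {y : ℝ} (hy0 : 0 ≤ y) (hy : y ≤ 1/2) (R : ℕ) :
    ∑ r ∈ Icc 1 R, y ^ r ≤ 2 * y := by
  have hrange : ∀ R' : ℕ, ∑ i ∈ range R', y ^ i ≤ 2 := by
    intro R'
    induction R' with
    | zero => simp
    | succ p ih =>
      have hS : (0:ℝ) ≤ ∑ i ∈ range p, y ^ i := Finset.sum_nonneg fun i _ => by positivity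
      rw [Finset.sum_range_succ']
      have he : ∑ i ∈ range p, y ^ (i+1) = y * ∑ i ∈ range p, y ^ i := by
        rw [Finset.mul_sum]
        exact Finset.sum_congr rfl fun i _ => by rw [pow_succ]; ring
      rw [he]
      nlinarith
  have h1 : ∑ r ∈ Icc 1 R, y ^ r = ∑ i ∈ range R, y ^ (1 + i) := by
    rw [← Finset.Ico_add_one_right_eq_Icc, Finset.sum_Ico_eq_sum_range]
    simp
  rw [h1]
  have : ∑ i ∈ range R, y ^ (1+i) = y * ∑ i ∈ range R, y ^ i := by
    rw [Finset.mul_sum]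
    apply Finset.sum_congr rfl
    intro i _
    rw [pow_add, pow_one]
  rw [this]
  calc y * ∑ i ∈ range R, y ^ i ≤ y * 2 := by
        apply mul_le_mul_of_nonneg_left (hrange R) hy0
  _ = 2 * y := by ring

private def sumIsLeftEquiv (α β : Type*) : {x : α ⊕ β // x.isLeft = true} ≃ α where
  toFun x := x.1.getLeft x.2
  invFun a := ⟨Sum.inl a, rfl⟩
  left_inv := by rintro ⟨x | x, h⟩ <;> simp_all
  right_inv a := rfl

private lemma card_forall_isLeft {N n : ℕ} (Q : Finset (Fin N)) :
    (Finset.univ.filter (fun F : Fin N → Fin N ⊕ Fin n =>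
        ∀ i ∈ Q, (F i).isLeft)).card = N ^ Q.card * (N + n) ^ (N - Q.card) := by
  classical
  rw [← Fintype.card_subtype]
  have e1 : {F : Fin N → Fin N ⊕ Fin n // ∀ i ∈ Q, (F i).isLeft}
      ≃ ∀ i : Fin N, {b : Fin N ⊕ Fin n // i ∈ Q → b.isLeft} :=
    Equiv.subtypePiEquivPi (β := fun _ => Fin N ⊕ Fin n)
      (p := fun i b => i ∈ Q → b.isLeft = true)
  rw [Fintype.card_congr e1, Fintype.card_pi]
  have hcard : ∀ i : Fin N, Fintype.card {b : Fin N ⊕ Fin n // i ∈ Q → b.isLeft}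
      = if i ∈ Q then N else N + n := by
    intro i
    by_cases hi : i ∈ Q
    · rw [if_pos hi]
      have e2 : {b : Fin N ⊕ Fin n // i ∈ Q → b.isLeft} ≃ {b : Fin N ⊕ Fin n // b.isLeft = true} :=
        Equiv.subtypeEquivRight (fun b => by simp [hi])
      rw [Fintype.card_congr e2, Fintype.card_congr (sumIsLeftEquiv (Fin N) (Fin n)),
        Fintype.card_fin]
    · rw [if_neg hi]
      have e2 : {b : Fin N ⊕ Fin n // i ∈ Q → b.isLeft} ≃ (Fin N ⊕ Fin n) :=
        Equiv.subtypeUnivEquiv (fun b => by simp [hi])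
      rw [Fintype.card_congr e2, Fintype.card_sum, Fintype.card_fin, Fintype.card_fin]
  calc ∏ i : Fin N, Fintype.card {b : Fin N ⊕ Fin n // i ∈ Q → b.isLeft}
      = ∏ i : Fin N, (if i ∈ Q then N else N + n) := Finset.prod_congr rfl (fun i _ => hcard i)
  _ = (∏ i ∈ Q, (if i ∈ Q then N else N + n)) * ∏ i ∈ Qᶜ, (if i ∈ Q then N else N + n) :=
      (Finset.prod_mul_prod_compl Q _).symm
  _ = N ^ Q.card * (N + n) ^ (N - Q.card) := by
      rw [Finset.prod_congr rfl (fun i hi => if_pos hi),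
        Finset.prod_congr rfl (fun i (hi : i ∈ Qᶜ) => if_neg (Finset.mem_compl.mp hi)),
        Finset.prod_const, Finset.prod_const, Finset.card_compl, Fintype.card_fin]

private lemma count_small_image (N n v : ℕ) :
    ((Finset.univ.filter (fun f : Fin N → Fin n =>
        (Finset.image f Finset.univ).card ≤ v)).card : ℕ)
      ≤ N.choose (N - v) * (N ^ (N - v) * (N + n) ^ (N - (N - v))) := by
  classical
  set enc : (Fin N → Fin n) → (Fin N → Fin N ⊕ Fin n) :=
    fun f i => if h : ∃ j, j < i ∧ f j = f i then Sum.inl h.choose else Sum.inr (f i) with henc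
  have enc_inj : Function.Injective enc := by
    intro f g hfg
    by_contra hne
    have hex : ∃ i, f i ≠ g i := Function.ne_iff.mp hne
    have hsne : (Finset.univ.filter (fun i => f i ≠ g i)).Nonempty :=
      ⟨hex.choose, by simp [hex.choose_spec]⟩
    set i := (Finset.univ.filter (fun i => f i ≠ g i)).min' hsne with hidef
    have hi : f i ≠ g i := by
      have h' := Finset.min'_mem _ hsne
      exact (Finset.mem_filter.mp h').2
    have hmin : ∀ j, j < i → f j = g j := by
      intro j hj
      by_contra hcon
      have hjs : j ∈ Finset.univ.filter (fun i => f i ≠ g i) := by simp [hcon]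
      exact absurd (Finset.min'_le _ j hjs) (not_le.mpr hj)
    have h1 := congrFun hfg i
    by_cases h : ∃ j, j < i ∧ f j = f i
    · by_cases h' : ∃ j, j < i ∧ g j = g i
      · simp only [henc, dif_pos h, dif_pos h'] at h1
        injection h1 with h2
        have hspec := h.choose_spec
        have hspec' := h'.choose_spec
        apply hi
        rw [← hspec.2, hmin _ hspec.1, h2, hspec'.2]
      · simp only [henc, dif_pos h, dif_neg h'] at h1
        cases h1
    · by_cases h' : ∃ j, j < i ∧ g j = g i
      · simp only [henc, dif_neg h, dif_pos h'] at h1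
        cases h1
      · simp only [henc, dif_neg h, dif_neg h'] at h1
        injection h1 with h2
        exact hi h2
  set B : Finset (Fin N → Fin N ⊕ Fin n) :=
    (Finset.powersetCard (N - v) Finset.univ).biUnion
      (fun Q => Finset.univ.filter (fun F => ∀ i ∈ Q, (F i).isLeft)) with hB
  have hmem : ∀ f ∈ (Finset.univ.filter (fun f : Fin N → Fin n =>
      (Finset.image f Finset.univ).card ≤ v)), enc f ∈ B := by
    intro f hf
    have hv : (Finset.image f Finset.univ).card ≤ v := (Finset.mem_filter.mp hf).2
    set Rt : Finset (Fin N) := Finset.univ.filter (fun i => ¬ ((enc f i).isLeft = true)) with hRt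
    have hRcard : Rt.card ≤ v := by
      have hinj : Set.InjOn f ↑Rt := by
        intro a ha b hb hab
        by_contra hne
        rcases lt_or_gt_of_ne hne with hlt | hlt
        · have hex2 : ∃ j, j < b ∧ f j = f b := ⟨a, hlt, hab⟩
          have hmem' := Finset.mem_coe.mp hb
          have hnl := (Finset.mem_filter.mp hmem').2
          apply hnl
          simp only [henc]
          rw [dif_pos hex2]
          rfl
        · have hex2 : ∃ j, j < a ∧ f j = f a := ⟨b, hlt, hab.symm⟩
          have hmem' := Finset.mem_coe.mp ha
          have hnl := (Finset.mem_filter.mp hmem').2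
          apply hnl
          simp only [henc]
          rw [dif_pos hex2]
          rfl
      calc Rt.card = (Rt.image f).card := (Finset.card_image_of_injOn hinj).symm
      _ ≤ (Finset.image f Finset.univ).card :=
          Finset.card_le_card (Finset.image_subset_image (Finset.subset_univ _))
      _ ≤ v := hv
    have hLcard : N - v ≤ (Finset.univ.filter (fun i => (enc f i).isLeft = true)).card := by
      have htot := Finset.card_filter_add_card_filter_not
        (s := (Finset.univ : Finset (Fin N))) (p := fun i => (enc f i).isLeft = true)
      have : (Finset.univ.filter (fun i => (enc f i).isLeft = true)).card + Rt.card = N := by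
        rw [hRt]
        simpa using htot
      omega
    obtain ⟨Q, hQsub, hQcard⟩ := Finset.exists_subset_card_eq hLcard
    rw [hB]
    apply Finset.mem_biUnion.mpr
    refine ⟨Q, ?_, ?_⟩
    · exact Finset.mem_powersetCard.mpr ⟨Finset.subset_univ _, hQcard⟩
    · apply Finset.mem_filter.mpr
      refine ⟨Finset.mem_univ _, fun i hiQ => ?_⟩
      have := hQsub hiQ
      exact (Finset.mem_filter.mp this).2
  calc (Finset.univ.filter (fun f : Fin N → Fin n =>
        (Finset.image f Finset.univ).card ≤ v)).card
      ≤ B.card := Finset.card_le_card_of_injOn enc hmem (enc_inj.injOn)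
  _ ≤ ∑ Q ∈ Finset.powersetCard (N - v) Finset.univ,
        (Finset.univ.filter (fun F : Fin N → Fin N ⊕ Fin n => ∀ i ∈ Q, (F i).isLeft)).card :=
      Finset.card_biUnion_le
  _ = ∑ Q ∈ Finset.powersetCard (N - v) Finset.univ, N ^ (N - v) * (N + n) ^ (N - (N - v)) := by
      apply Finset.sum_congr rfl
      intro Q hQ
      rw [card_forall_isLeft Q, (Finset.mem_powersetCard.mp hQ).2]
  _ = N.choose (N - v) * (N ^ (N - v) * (N + n) ^ (N - (N - v))) := by
      rw [Finset.sum_const, Finset.card_powersetCard, Finset.card_univ, Fintype.card_fin,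
        smul_eq_mul]

private lemma card_const_on_T {k n m : ℕ} (hn : 0 < n) (T : Finset (Fin m)) :
    (Finset.univ.filter (fun g : Fin m → Fin k → Fin n =>
        ∀ c ∈ T, g c = (fun _ => (⟨0, hn⟩ : Fin n)))).card = (n ^ k) ^ (m - T.card) := by
  classical
  rw [← Fintype.card_subtype]
  have e1 : {g : Fin m → Fin k → Fin n // ∀ c ∈ T, g c = (fun _ => (⟨0, hn⟩ : Fin n))}
      ≃ ∀ c : Fin m, {h : Fin k → Fin n // c ∈ T → h = (fun _ => (⟨0, hn⟩ : Fin n))} :=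
    Equiv.subtypePiEquivPi (β := fun _ => Fin k → Fin n)
      (p := fun c h => c ∈ T → h = (fun _ => (⟨0, hn⟩ : Fin n)))
  rw [Fintype.card_congr e1, Fintype.card_pi]
  have hcard : ∀ c : Fin m,
      Fintype.card {h : Fin k → Fin n // c ∈ T → h = (fun _ => (⟨0, hn⟩ : Fin n))}
        = if c ∈ T then 1 else n ^ k := by
    intro c
    by_cases hc : c ∈ T
    · rw [if_pos hc]
      have e2 : {h : Fin k → Fin n // c ∈ T → h = (fun _ => (⟨0, hn⟩ : Fin n))}
          ≃ {h : Fin k → Fin n // h = (fun _ => (⟨0, hn⟩ : Fin n))} :=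
        Equiv.subtypeEquivRight (fun h => by simp [hc])
      rw [Fintype.card_congr e2, Fintype.card_subtype_eq]
    · rw [if_neg hc]
      have e2 : {h : Fin k → Fin n // c ∈ T → h = (fun _ => (⟨0, hn⟩ : Fin n))}
          ≃ (Fin k → Fin n) := Equiv.subtypeUnivEquiv (fun h => by simp [hc])
      rw [Fintype.card_congr e2, Fintype.card_fun, Fintype.card_fin, Fintype.card_fin]
  calc ∏ c : Fin m, Fintype.card {h : Fin k → Fin n // c ∈ T → h = (fun _ => (⟨0, hn⟩ : Fin n))}
      = ∏ c : Fin m, (if c ∈ T then 1 else n ^ k) := Finset.prod_congr rfl (fun c _ => hcard c)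
  _ = (∏ c ∈ T, (if c ∈ T then 1 else n ^ k)) * ∏ c ∈ Tᶜ, (if c ∈ T then 1 else n ^ k) :=
      (Finset.prod_mul_prod_compl T _).symm
  _ = (n ^ k) ^ (m - T.card) := by
      rw [Finset.prod_congr rfl (fun c hc => if_pos hc),
        Finset.prod_congr rfl (fun c (hc : c ∈ Tᶜ) => if_neg (Finset.mem_compl.mp hc)),
        Finset.prod_const, Finset.prod_const, Finset.card_compl, Fintype.card_fin,
        one_pow, one_mul]

private lemma card_bad_T {k n m : ℕ} (hn : 0 < n) (T : Finset (Fin m)) (V : ℕ) :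
    (Finset.univ.filter (fun S : Fin m → Fin k → Fin n =>
        ((T.biUnion fun c => Finset.image (S c) Finset.univ).card ≤ V))).card
      ≤ (Finset.univ.filter (fun f : Fin (T.card * k) → Fin n =>
          (Finset.image f Finset.univ).card ≤ V)).card * (n ^ k) ^ (m - T.card) := by
  classical
  set r := T.card with hr
  set σ := T.orderEmbOfFin hr.symm with hσ
  set Ψ : (Fin m → Fin k → Fin n) → ((Fin (r * k) → Fin n) × (Fin m → Fin k → Fin n)) :=
    fun S => (fun p => S (σ (finProdFinEquiv.symm p).1) (finProdFinEquiv.symm p).2,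
      fun c => if c ∈ T then (fun _ => (⟨0, hn⟩ : Fin n)) else S c) with hΨ
  have himage : ∀ S : Fin m → Fin k → Fin n,
      Finset.image (fun p : Fin (r * k) => S (σ (finProdFinEquiv.symm p).1)
          (finProdFinEquiv.symm p).2) Finset.univ
        = T.biUnion fun c => Finset.image (S c) Finset.univ := by
    intro S
    ext x
    simp only [Finset.mem_image, Finset.mem_biUnion, Finset.mem_univ, true_and]
    constructor
    · rintro ⟨p, hp⟩
      exact ⟨σ (finProdFinEquiv.symm p).1, Finset.orderEmbOfFin_mem _ _ _,
        ⟨(finProdFinEquiv.symm p).2, hp⟩⟩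
    · rintro ⟨c, hc, j, hj⟩
      have : c ∈ Set.range ⇑σ := by
        rw [hσ, Finset.range_orderEmbOfFin]
        exact hc
      obtain ⟨i, hi⟩ := this
      refine ⟨finProdFinEquiv (i, j), ?_⟩
      rw [Equiv.symm_apply_apply]
      rw [hi]
      exact hj
  have hstep : (Finset.univ.filter (fun S : Fin m → Fin k → Fin n =>
        ((T.biUnion fun c => Finset.image (S c) Finset.univ).card ≤ V))).card
      ≤ ((Finset.univ.filter (fun f : Fin (r * k) → Fin n =>
          (Finset.image f Finset.univ).card ≤ V)) ×ˢ
         (Finset.univ.filter (fun g : Fin m → Fin k → Fin n =>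
            ∀ c ∈ T, g c = (fun _ => (⟨0, hn⟩ : Fin n))))).card := by
    apply Finset.card_le_card_of_injOn Ψ
    · intro S hS
      have hcond := (Finset.mem_filter.mp hS).2
      apply Finset.mem_product.mpr
      constructor
      · apply Finset.mem_filter.mpr
        refine ⟨Finset.mem_univ _, ?_⟩
        rw [hΨ]
        simp only
        rw [himage S]
        exact hcond
      · apply Finset.mem_filter.mpr
        refine ⟨Finset.mem_univ _, fun c hc => ?_⟩
        rw [hΨ]
        simp only
        rw [if_pos hc]
    · intro S hS S' hS' heq
      have h1 : ∀ p, S (σ (finProdFinEquiv.symm p).1) (finProdFinEquiv.symm p).2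
          = S' (σ (finProdFinEquiv.symm p).1) (finProdFinEquiv.symm p).2 := by
        intro p
        have := congrArg Prod.fst heq
        exact congrFun this p
      have h2 : ∀ c, (if c ∈ T then (fun _ => (⟨0, hn⟩ : Fin n)) else S c)
          = (if c ∈ T then (fun _ => (⟨0, hn⟩ : Fin n)) else S' c) := by
        intro c
        have := congrArg Prod.snd heq
        exact congrFun this c
      funext c j
      by_cases hc : c ∈ T
      · have : c ∈ Set.range ⇑σ := by
          rw [hσ, Finset.range_orderEmbOfFin]
          exact hc
        obtain ⟨i, hi⟩ := this
        have := h1 (finProdFinEquiv (i, j))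
        rw [Equiv.symm_apply_apply] at this
        simp only at this
        rw [hi] at this
        exact this
      · have := h2 c
        rw [if_neg hc, if_neg hc] at this
        exact congrFun this j
  calc (Finset.univ.filter (fun S : Fin m → Fin k → Fin n =>
        ((T.biUnion fun c => Finset.image (S c) Finset.univ).card ≤ V))).card
      ≤ _ := hstep
  _ = (Finset.univ.filter (fun f : Fin (r * k) → Fin n =>
          (Finset.image f Finset.univ).card ≤ V)).card * (n ^ k) ^ (m - r) := by
      rw [Finset.card_product, card_const_on_T hn T]

set_option maxHeartbeats 2000000 in
theorem stmt_17 (k t : ℕ) (ε : ℝ) (ht : 2 < t) (htk : t ≤ k) (hε : 0 < ε) :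
    Tendsto (fun n : ℕ =>
      ((Nat.card {S : Fin ⌊(n : ℝ) ^ ((t : ℝ) / 2 - ε)⌋₊ → Fin k → Fin n //
          ∀ T : Finset (Fin ⌊(n : ℝ) ^ ((t : ℝ) / 2 - ε)⌋₊),
            (T.card : ℝ) ≤ (n : ℝ) ^ (ε / ((t : ℝ) - 2)) →
              ((k : ℝ) - (t : ℝ) / 2 + ε / 2) * T.card ≤
                ((T.biUnion fun c =>
                  Finset.image (S c) Finset.univ).card : ℝ)} : ℝ) /
        (((n ^ k) ^ ⌊(n : ℝ) ^ ((t : ℝ) / 2 - ε)⌋₊ : ℕ) : ℝ)))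
      atTop (nhds 1) := by
  classical
  have ht' : (2:ℝ) < (t:ℝ) := by exact_mod_cast ht
  have htk' : (t:ℝ) ≤ (k:ℝ) := by exact_mod_cast htk
  have ht2 : (0:ℝ) < (t:ℝ) - 2 := by linarith
  have hk0 : 0 < k := by omega
  set β' : ℝ := (t:ℝ)/2 - ε with hβ'
  set α' : ℝ := ε / ((t:ℝ) - 2) with hα'
  set cc : ℝ := ((t:ℝ) - ε)/2 with hcc
  set ee : ℝ := (k:ℝ) - (t:ℝ)/2 + ε/2 with hee
  set θ : ℝ := min α' β' with hθ
  set δ : ℝ := min (ε/2) (ε^2/(2*((t:ℝ)-2))) with hδ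
  have hδpos : 0 < δ := lt_min (by linarith) (by positivity)
  set K : ℝ := Real.exp 1 * 4^k * (k:ℝ)^cc with hK
  have hk0' : (0:ℝ) < (k:ℝ) := by exact_mod_cast hk0
  have hKpos : 0 < K := by
    have : (0:ℝ) < (k:ℝ)^cc := Real.rpow_pos_of_pos hk0' cc
    positivity
  have hα'pos : 0 < α' := div_pos hε ht2
  have hθlt1 : θ < 1 := by
    by_cases hb : β' < 1
    · exact lt_of_le_of_lt (min_le_right _ _) hb
    · push_neg at hb
      have hαle : α' ≤ 1/2 := by
        rw [hα', div_le_iff₀ ht2]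
        rw [hβ'] at hb
        linarith
      exact lt_of_le_of_lt (min_le_left _ _) (by linarith)
  have h0 : Tendsto (fun n : ℕ => (n:ℝ)^(-δ)) atTop (nhds 0) :=
    (tendsto_rpow_neg_atTop hδpos).comp tendsto_natCast_atTop_atTop
  have htend : Tendsto (fun n : ℕ => 1 - 2*K*(n:ℝ)^(-δ)) atTop (nhds 1) := by
    have h1 := (h0.const_mul (2*K)).const_sub 1
    simpa using h1
  apply tendsto_of_tendsto_of_tendsto_of_le_of_le' htend tendsto_const_nhds ?_ ?_
  · -- main lower bound
    have hev2 : ∀ᶠ n : ℕ in atTop, (k:ℝ) ≤ (n:ℝ)^(1-θ) := by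
      have hcomp := (tendsto_rpow_atTop (by linarith : (0:ℝ) < 1 - θ)).comp
        (tendsto_natCast_atTop_atTop (R := ℝ))
      exact hcomp.eventually_ge_atTop (k:ℝ)
    have hev3 : ∀ᶠ n : ℕ in atTop, K*(n:ℝ)^(-δ) ≤ 1/2 := by
      have h1 : Tendsto (fun n : ℕ => K*(n:ℝ)^(-δ)) atTop (nhds (K*0)) := h0.const_mul K
      rw [mul_zero] at h1
      exact h1.eventually_le_const (by norm_num)
    filter_upwards [eventually_ge_atTop 2, hev2, hev3] with n hn2 hev2n hev3n
    have hn0 : 0 < n := by omega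
    have hn2R : (2:ℝ) ≤ (n:ℝ) := by exact_mod_cast hn2
    have hn1R : (1:ℝ) ≤ (n:ℝ) := by linarith
    have hnpos : (0:ℝ) < (n:ℝ) := by linarith
    set M := ⌊(n : ℝ) ^ β'⌋₊ with hM
    set P : (Fin M → Fin k → Fin n) → Prop := fun S =>
      ∀ T : Finset (Fin M), (T.card : ℝ) ≤ (n : ℝ) ^ α' →
        ee * T.card ≤ ((T.biUnion fun c => Finset.image (S c) Finset.univ).card : ℝ) with hP
    have hnum : Nat.card (Subtype P) = (Finset.univ.filter P).card := by
      rw [Nat.card_eq_fintype_card]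
      exact Fintype.card_subtype P
    set total : ℕ := (n^k)^M with htotal
    have htotpos : (0:ℝ) < (total:ℕ) := by
      have : 0 < total := by
        rw [htotal]
        exact Nat.pow_pos (Nat.pow_pos hn0)
      exact_mod_cast this
    set bad := Finset.univ.filter (fun S : Fin M → Fin k → Fin n => ¬ P S) with hbad
    have hsplit : (Finset.univ.filter P).card + bad.card = total := by
      rw [hbad, htotal]
      have hh := Finset.card_filter_add_card_filter_not
        (s := (Finset.univ : Finset (Fin M → Fin k → Fin n))) (p := P)
      rw [Finset.card_univ, Fintype.card_fun, Fintype.card_fun, Fintype.card_fin,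
        Fintype.card_fin, Fintype.card_fin] at hh
      exact hh
    have MC : (bad.card : ℝ) ≤ 2*K*(n:ℝ)^(-δ) * total := by
      set V : ℕ → ℕ := fun r => ⌈ee * (r:ℝ)⌉₊ - 1 with hV
      set A : Finset (Fin M) → Finset (Fin M → Fin k → Fin n) := fun T =>
        Finset.univ.filter (fun S =>
          ((T.biUnion fun c => Finset.image (S c) Finset.univ).card ≤ V T.card)) with hA
      set TT : Finset (Finset (Fin M)) := Finset.univ.filter
        (fun T => 0 < T.card ∧ (T.card : ℝ) ≤ (n:ℝ)^α') with hTT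
      have hsub : bad ⊆ TT.biUnion A := by
        intro S hS
        rw [hbad, Finset.mem_filter] at hS
        have hnP : ¬ (∀ T : Finset (Fin M), (T.card : ℝ) ≤ (n : ℝ) ^ α' →
            ee * T.card ≤ ((T.biUnion fun c => Finset.image (S c) Finset.univ).card : ℝ)) :=
          hS.2
        push_neg at hnP
        obtain ⟨T, hT1, hT2⟩ := hnP
        have hTpos : 0 < T.card := by
          rcases Nat.eq_zero_or_pos T.card with h0' | h0'
          · exfalso
            have hTe : T = ∅ := Finset.card_eq_zero.mp h0'
            subst hTe
            simp at hT2
          · exact h0'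
        apply Finset.mem_biUnion.mpr
        refine ⟨T, ?_, ?_⟩
        · rw [hTT]
          exact Finset.mem_filter.mpr ⟨Finset.mem_univ _, hTpos, hT1⟩
        · rw [hA]
          apply Finset.mem_filter.mpr
          refine ⟨Finset.mem_univ _, ?_⟩
          have hlt : ((T.biUnion fun c => Finset.image (S c) Finset.univ).card)
              < ⌈ee * (T.card:ℝ)⌉₊ := Nat.lt_ceil.mpr hT2
          simp only [hV]
          omega
      set R := min M ⌊(n:ℝ)^α'⌋₊ with hR
      set BB : ℕ → ℕ := fun r => (r*k).choose (r*k - V r) *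
        ((r*k)^(r*k - V r) * (r*k + n)^((r*k) - (r*k - V r))) * (n^k)^(M - r) with hBB
      have hcardbound : (bad.card : ℕ) ≤ ∑ r ∈ Finset.Icc 1 R, (M.choose r) * BB r := by
        have hTsub : TT ⊆ (Finset.Icc 1 R).biUnion
            (fun r => Finset.powersetCard r Finset.univ) := by
          intro T hT
          rw [hTT, Finset.mem_filter] at hT
          obtain ⟨-, hTpos, hTle⟩ := hT
          apply Finset.mem_biUnion.mpr
          refine ⟨T.card, ?_, ?_⟩
          · rw [Finset.mem_Icc]
            refine ⟨hTpos, le_min ?_ ?_⟩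
            · calc T.card ≤ Fintype.card (Fin M) := Finset.card_le_univ T
              _ = M := Fintype.card_fin M
            · exact Nat.le_floor hTle
          · exact Finset.mem_powersetCard_univ.mpr rfl
        calc bad.card ≤ (TT.biUnion A).card := Finset.card_le_card hsub
        _ ≤ ∑ T ∈ TT, (A T).card := Finset.card_biUnion_le
        _ ≤ ∑ T ∈ TT, BB T.card := by
            apply Finset.sum_le_sum
            intro T _
            rw [hA, hBB]
            simp only
            calc (Finset.univ.filter (fun S : Fin M → Fin k → Fin n =>
                ((T.biUnion fun c => Finset.image (S c) Finset.univ).card ≤ V T.card))).card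
                ≤ (Finset.univ.filter (fun f : Fin (T.card * k) → Fin n =>
                    (Finset.image f Finset.univ).card ≤ V T.card)).card
                      * (n ^ k) ^ (M - T.card) := card_bad_T hn0 T (V T.card)
            _ ≤ ((T.card*k).choose (T.card*k - V T.card) *
                  ((T.card*k)^(T.card*k - V T.card) *
                    (T.card*k + n)^((T.card*k) - (T.card*k - V T.card))))
                      * (n ^ k) ^ (M - T.card) :=
                Nat.mul_le_mul_right _ (count_small_image (T.card * k) n (V T.card))
        _ ≤ ∑ T ∈ (Finset.Icc 1 R).biUnion (fun r => Finset.powersetCard r Finset.univ),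
              BB T.card := Finset.sum_le_sum_of_subset hTsub
        _ = ∑ r ∈ Finset.Icc 1 R, ∑ T ∈ Finset.powersetCard r Finset.univ, BB T.card := by
            apply Finset.sum_biUnion
            intro a _ b _ hab
            apply Finset.disjoint_left.mpr
            intro T hTa hTb
            rw [Finset.mem_powersetCard_univ] at hTa hTb
            exact hab (hTa ▸ hTb ▸ rfl)
        _ = ∑ r ∈ Finset.Icc 1 R, (M.choose r) * BB r := by
            apply Finset.sum_congr rfl
            intro r _
            rw [Finset.sum_congr rfl (fun T hT => by
              rw [Finset.mem_powersetCard_univ.mp hT]), Finset.sum_const,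
              Finset.card_powersetCard, Finset.card_univ, Fintype.card_fin, smul_eq_mul]
      have hperR : ∀ r ∈ Finset.Icc 1 R,
          ((M.choose r * BB r : ℕ) : ℝ) ≤ (K*(n:ℝ)^(-δ))^r * total := by
        intro r hr
        rw [Finset.mem_Icc] at hr
        obtain ⟨hr1, hrR⟩ := hr
        have hrM : r ≤ M := le_trans hrR (min_le_left _ _)
        have hrfloor : r ≤ ⌊(n:ℝ)^α'⌋₊ := le_trans hrR (min_le_right _ _)
        have hα'0 : (0:ℝ) ≤ (n:ℝ)^α' := Real.rpow_nonneg (le_of_lt hnpos) _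
        have hrs : (r:ℝ) ≤ (n:ℝ)^α' := le_trans (Nat.cast_le.mpr hrfloor) (Nat.floor_le hα'0)
        have hβnn : (0:ℝ) ≤ (n:ℝ)^β' := Real.rpow_nonneg (le_of_lt hnpos) _
        have hMle : (M:ℝ) ≤ (n:ℝ)^β' := Nat.floor_le hβnn
        have hrβ : (r:ℝ) ≤ (n:ℝ)^β' := le_trans (Nat.cast_le.mpr hrM) hMle
        have hr1R : (1:ℝ) ≤ (r:ℝ) := by exact_mod_cast hr1
        have hrposR : (0:ℝ) < (r:ℝ) := by linarith
        have hβ0 : 0 ≤ β' := by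
          by_contra hcon
          push_neg at hcon
          have hlt1 : (n:ℝ)^β' < 1 := Real.rpow_lt_one_of_one_lt_of_neg (by linarith) hcon
          linarith [le_trans hr1R hrβ]
        have hεt2 : ε ≤ (t:ℝ)/2 := by
          rw [hβ'] at hβ0
          linarith
        have hek : ee ≤ (k:ℝ) := by rw [hee]; linarith
        have heepos : (0:ℝ) < ee := by rw [hee]; linarith
        have hccpos : (0:ℝ) < cc := by rw [hcc]; linarith
        have hrn : (r:ℝ)*(k:ℝ) ≤ (n:ℝ) := by
          have hrθ : (r:ℝ) ≤ (n:ℝ)^θ := by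
            rw [hθ]
            rcases min_cases α' β' with ⟨hmeq, -⟩ | ⟨hmeq, -⟩ <;> rw [hmeq]
            exacts [hrs, hrβ]
          have h1 : (k:ℝ) * (n:ℝ)^θ ≤ (n:ℝ)^(1-θ) * (n:ℝ)^θ :=
            mul_le_mul_of_nonneg_right hev2n (Real.rpow_nonneg (le_of_lt hnpos) _)
          calc (r:ℝ)*(k:ℝ) ≤ (n:ℝ)^θ * (k:ℝ) :=
                mul_le_mul_of_nonneg_right hrθ (le_of_lt hk0')
          _ = (k:ℝ)*(n:ℝ)^θ := by ring
          _ ≤ (n:ℝ)^(1-θ)*(n:ℝ)^θ := h1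
          _ = (n:ℝ)^((1-θ)+θ) := (Real.rpow_add hnpos _ _).symm
          _ = (n:ℝ)^(1:ℝ) := by norm_num
          _ = (n:ℝ) := Real.rpow_one n
        have hceil1 : 1 ≤ ⌈ee * (r:ℝ)⌉₊ := Nat.ceil_pos.mpr (by positivity)
        have hVrcast : ((V r : ℕ):ℝ) = (⌈ee * (r:ℝ)⌉₊ : ℝ) - 1 := by
          rw [hV]
          simp only
          rw [Nat.cast_sub hceil1]
          norm_num
        have hVlt : ((V r:ℕ):ℝ) < ee * r := by
          rw [hVrcast]
          have := Nat.ceil_lt_add_one (by positivity : (0:ℝ) ≤ ee * r)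
          linarith
        have hVN : V r ≤ r*k := by
          have hlt : ((V r:ℕ):ℝ) < ((r*k:ℕ):ℝ) := by
            push_cast
            calc ((V r:ℕ):ℝ) < ee * r := hVlt
            _ ≤ (k:ℝ) * r := mul_le_mul_of_nonneg_right hek (le_of_lt hrposR)
            _ = (r:ℝ)*(k:ℝ) := by ring
          exact le_of_lt (by exact_mod_cast hlt)
        have hqcast : ((r*k - V r : ℕ):ℝ) = (r:ℝ)*(k:ℝ) - ((V r:ℕ):ℝ) := by
          push_cast [Nat.cast_sub hVN]
          ring
        have hqcc : cc * r ≤ ((r*k - V r : ℕ):ℝ) := by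
          rw [hqcast]
          have hkcc : (k:ℝ) - ee = cc := by rw [hee, hcc]; ring
          nlinarith [hVlt]
        have hNnn : (r:ℝ)*(k:ℝ) ≤ (n:ℝ) := hrn
        have hx0 : (0:ℝ) < ((r:ℝ)*(k:ℝ))/n := by positivity
        have hx1 : ((r:ℝ)*(k:ℝ))/n ≤ 1 := by
          rw [div_le_one hnpos]
          exact hNnn
        -- the scalar base bound
        have hbase : Real.exp 1 * ((M:ℝ)/r) * (4:ℝ)^k * (((r:ℝ)*(k:ℝ))/n)^cc
            ≤ K * (n:ℝ)^(-δ) := by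
          have hsplitb : (((r:ℝ)*(k:ℝ))/n)^cc = (k:ℝ)^cc * ((r:ℝ)/n)^cc := by
            rw [show ((r:ℝ)*(k:ℝ))/n = (k:ℝ)*((r:ℝ)/n) by ring]
            exact Real.mul_rpow (le_of_lt hk0') (by positivity)
          have hkey : ((M:ℝ)/r) * ((r:ℝ)/n)^cc ≤ (n:ℝ)^(-δ) := by
            have h5 : ((r:ℝ)/n)^cc = (r:ℝ)^cc / (n:ℝ)^cc :=
              Real.div_rpow (le_of_lt hrposR) (le_of_lt hnpos) cc
            have h6 : ((M:ℝ)/r) * ((r:ℝ)^cc/(n:ℝ)^cc)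
                = (M:ℝ) * ((r:ℝ)^(cc-1)) / (n:ℝ)^cc := by
              rw [Real.rpow_sub hrposR, Real.rpow_one]
              field_simp
            rw [h5, h6]
            have hncc : (0:ℝ) < (n:ℝ)^cc := Real.rpow_pos_of_pos hnpos cc
            rcases le_or_gt 1 cc with hc1 | hc1
            · have h7 : (r:ℝ)^(cc-1) ≤ ((n:ℝ)^α')^(cc-1) :=
                Real.rpow_le_rpow (le_of_lt hrposR) hrs (by linarith)
              have h8 : ((n:ℝ)^α')^(cc-1) = (n:ℝ)^(α'*(cc-1)) :=
                (Real.rpow_mul (le_of_lt hnpos) _ _).symm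
              have h9 : (M:ℝ) * ((r:ℝ)^(cc-1)) ≤ (n:ℝ)^β' * (n:ℝ)^(α'*(cc-1)) := by
                apply mul_le_mul hMle (by rw [← h8]; exact h7)
                  (by positivity) hβnn
              calc (M:ℝ) * ((r:ℝ)^(cc-1)) / (n:ℝ)^cc
                  ≤ ((n:ℝ)^β' * (n:ℝ)^(α'*(cc-1))) / (n:ℝ)^cc := by
                    rw [div_eq_mul_inv, div_eq_mul_inv]
                    exact mul_le_mul_of_nonneg_right h9 (by positivity)
              _ = (n:ℝ)^(β' + α'*(cc-1) - cc) := by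
                    rw [← Real.rpow_add hnpos, ← Real.rpow_sub hnpos]
              _ ≤ (n:ℝ)^(-δ) := by
                    apply Real.rpow_le_rpow_of_exponent_le hn1R
                    have hδ2 : δ ≤ ε^2/(2*((t:ℝ)-2)) := min_le_right _ _
                    have hid : β' + α'*(cc-1) - cc = -(ε^2/(2*((t:ℝ)-2))) := by
                      rw [hβ', hα', hcc]
                      field_simp
                      ring
                    rw [hid]
                    linarith
            · have h7 : (r:ℝ)^(cc-1) ≤ 1 :=
                Real.rpow_le_one_of_one_le_of_nonpos hr1R (by linarith)
              have h9 : (M:ℝ) * ((r:ℝ)^(cc-1)) ≤ (n:ℝ)^β' := by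
                calc (M:ℝ) * ((r:ℝ)^(cc-1)) ≤ (M:ℝ) * 1 :=
                      mul_le_mul_of_nonneg_left h7 (Nat.cast_nonneg M)
                _ = (M:ℝ) := mul_one _
                _ ≤ (n:ℝ)^β' := hMle
              calc (M:ℝ) * ((r:ℝ)^(cc-1)) / (n:ℝ)^cc ≤ (n:ℝ)^β' / (n:ℝ)^cc := by
                    rw [div_eq_mul_inv, div_eq_mul_inv]
                    exact mul_le_mul_of_nonneg_right h9 (by positivity)
              _ = (n:ℝ)^(β' - cc) := by rw [← Real.rpow_sub hnpos]
              _ ≤ (n:ℝ)^(-δ) := by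
                    apply Real.rpow_le_rpow_of_exponent_le hn1R
                    have hδ1 : δ ≤ ε/2 := min_le_left _ _
                    have hid : β' - cc = -(ε/2) := by
                      rw [hβ', hcc]
                      ring
                    rw [hid]
                    linarith
          rw [hsplitb]
          calc Real.exp 1 * ((M:ℝ)/r) * (4:ℝ)^k * ((k:ℝ)^cc * ((r:ℝ)/n)^cc)
              = K * (((M:ℝ)/r) * ((r:ℝ)/n)^cc) := by rw [hK]; ring
          _ ≤ K * (n:ℝ)^(-δ) := mul_le_mul_of_nonneg_left hkey (le_of_lt hKpos)
        -- factor bounds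
        have hb1 : ((M.choose r : ℕ):ℝ) ≤ Real.exp 1^r * ((M:ℝ)/r)^r := by
          have hdn : M.choose r * (Nat.factorial r) ≤ M^r := by
            have h1 : Nat.factorial r * M.choose r = M.descFactorial r :=
              (Nat.descFactorial_eq_factorial_mul_choose M r).symm
            calc M.choose r * Nat.factorial r = Nat.factorial r * M.choose r := by ring
            _ = M.descFactorial r := h1
            _ ≤ M^r := Nat.descFactorial_le_pow M r
          have hdnR : ((M.choose r : ℕ):ℝ) * (Nat.factorial r : ℝ) ≤ (M:ℝ)^r := by
            exact_mod_cast hdn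
          have hrr := pow_le_exp_mul_factorial r
          rw [div_pow, ← mul_div_assoc, le_div_iff₀ (pow_pos hrposR r)]
          calc ((M.choose r:ℕ):ℝ) * (r:ℝ)^r
              ≤ ((M.choose r:ℕ):ℝ) * (Real.exp 1^r * (Nat.factorial r:ℝ)) := by
                apply mul_le_mul_of_nonneg_left hrr (by positivity)
          _ = Real.exp 1^r * (((M.choose r:ℕ):ℝ) * (Nat.factorial r:ℝ)) := by ring
          _ ≤ Real.exp 1^r * (M:ℝ)^r := by
                apply mul_le_mul_of_nonneg_left hdnR (by positivity)
        have hb2 : (((r*k).choose (r*k - V r) : ℕ) : ℝ) ≤ 2^(r*k) := by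
          have h1 : (r*k).choose (r*k - V r) ≤ 2^(r*k) := by
            have h2 := Nat.sum_range_choose (r*k)
            have h3 : (r*k).choose (r*k - V r) ≤ ∑ i ∈ Finset.range (r*k+1), (r*k).choose i :=
              Finset.single_le_sum (f := fun i => (r*k).choose i)
                (fun i _ => Nat.zero_le _) (Finset.mem_range.mpr (by omega))
            omega
          exact_mod_cast h1
        have hb3 : ((r:ℝ)*(k:ℝ)+(n:ℝ))^(V r) ≤ 2^(r*k) * (n:ℝ)^(V r) := by
          calc ((r:ℝ)*(k:ℝ)+(n:ℝ))^(V r) ≤ (2*(n:ℝ))^(V r) := by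
                apply pow_le_pow_left₀ (by positivity) (by linarith)
          _ = 2^(V r) * (n:ℝ)^(V r) := by rw [mul_pow]
          _ ≤ 2^(r*k) * (n:ℝ)^(V r) := by
                apply mul_le_mul_of_nonneg_right
                  (pow_le_pow_right₀ one_le_two hVN) (by positivity)
        have hb4 : ((r:ℝ)*(k:ℝ))^(r*k - V r)
            ≤ ((((r:ℝ)*(k:ℝ))/n)^cc)^r * (n:ℝ)^(r*k - V r) := by
          have hid : ((((r:ℝ)*(k:ℝ))/n))^(r*k - V r) * (n:ℝ)^(r*k - V r)
              = ((r:ℝ)*(k:ℝ))^(r*k - V r) := by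
            rw [← mul_pow, div_mul_cancel₀]
            exact ne_of_gt hnpos
          have hcmp : ((((r:ℝ)*(k:ℝ))/n))^(r*k - V r) ≤ ((((r:ℝ)*(k:ℝ))/n)^cc)^r := by
            have e1 : ((((r:ℝ)*(k:ℝ))/n))^(r*k - V r)
                = (((r:ℝ)*(k:ℝ))/n)^(((r*k - V r : ℕ)):ℝ) := (Real.rpow_natCast _ _).symm
            have e2 : ((((r:ℝ)*(k:ℝ))/n)^cc)^r = (((r:ℝ)*(k:ℝ))/n)^(cc*(r:ℝ)) := by
              rw [Real.rpow_mul (le_of_lt hx0), Real.rpow_natCast]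
            rw [e1, e2]
            exact Real.rpow_le_rpow_of_exponent_ge hx0 hx1 hqcc
          calc ((r:ℝ)*(k:ℝ))^(r*k - V r)
              = ((((r:ℝ)*(k:ℝ))/n))^(r*k - V r) * (n:ℝ)^(r*k - V r) := hid.symm
          _ ≤ ((((r:ℝ)*(k:ℝ))/n)^cc)^r * (n:ℝ)^(r*k - V r) := by
                apply mul_le_mul_of_nonneg_right hcmp (by positivity)
        -- assemble the core bound
        have hNsub : (r*k) - ((r*k) - V r) = V r := Nat.sub_sub_self hVN
        have h2rk : (2:ℝ)^(r*k) = ((2:ℝ)^k)^r := by rw [Nat.mul_comm, pow_mul]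
        have h4rk : ((2:ℝ)^k)^r * ((2:ℝ)^k)^r = ((4:ℝ)^k)^r := by
          rw [← mul_pow, ← mul_pow]
          norm_num
        have hcore : ((M.choose r:ℕ):ℝ) * ((((r*k).choose (r*k - V r):ℕ):ℝ) *
            (((r:ℝ)*(k:ℝ))^(r*k - V r) * ((r:ℝ)*(k:ℝ)+(n:ℝ))^(V r)))
            ≤ (K*(n:ℝ)^(-δ))^r * ((n:ℝ)^k)^r := by
          have hstep1 : ((M.choose r:ℕ):ℝ) * ((((r*k).choose (r*k - V r):ℕ):ℝ) *
              (((r:ℝ)*(k:ℝ))^(r*k - V r) * ((r:ℝ)*(k:ℝ)+(n:ℝ))^(V r)))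
              ≤ (Real.exp 1^r * ((M:ℝ)/r)^r) * ((2:ℝ)^(r*k) *
                ((((((r:ℝ)*(k:ℝ))/n)^cc)^r * (n:ℝ)^(r*k - V r)) *
                  ((2:ℝ)^(r*k) * (n:ℝ)^(V r)))) := by
            apply mul_le_mul hb1
            · apply mul_le_mul hb2
              · exact mul_le_mul hb4 hb3 (by positivity) (by positivity)
              · positivity
              · positivity
            · positivity
            · positivity
          have hstep2 : (Real.exp 1^r * ((M:ℝ)/r)^r) * ((2:ℝ)^(r*k) *
                ((((((r:ℝ)*(k:ℝ))/n)^cc)^r * (n:ℝ)^(r*k - V r)) *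
                  ((2:ℝ)^(r*k) * (n:ℝ)^(V r))))
              = (Real.exp 1 * ((M:ℝ)/r) * (4:ℝ)^k * (((r:ℝ)*(k:ℝ))/n)^cc)^r *
                  ((n:ℝ)^(r*k - V r) * (n:ℝ)^(V r)) := by
            rw [h2rk]
            rw [mul_pow, mul_pow, mul_pow, ← h4rk]
            ring
          have hstep3 : (Real.exp 1 * ((M:ℝ)/r) * (4:ℝ)^k * (((r:ℝ)*(k:ℝ))/n)^cc)^r *
                  ((n:ℝ)^(r*k - V r) * (n:ℝ)^(V r))
              ≤ (K*(n:ℝ)^(-δ))^r * ((n:ℝ)^(r*k - V r) * (n:ℝ)^(V r)) := by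
            apply mul_le_mul_of_nonneg_right _ (by positivity)
            apply pow_le_pow_left₀ _ hbase
            positivity
          have hstep4 : (n:ℝ)^(r*k - V r) * (n:ℝ)^(V r) = ((n:ℝ)^k)^r := by
            rw [← pow_add, Nat.sub_add_cancel hVN, Nat.mul_comm, pow_mul]
          exact ((hstep1.trans (le_of_eq hstep2)).trans hstep3).trans
            (le_of_eq (by rw [hstep4]))
        -- conclude the per-r bound
        have htsplit : ((n:ℝ)^k)^(M-r) * ((n:ℝ)^k)^r = ((n:ℝ)^k)^M := by
          rw [← pow_add, Nat.sub_add_cancel hrM]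
        have hBBcast : ((BB r : ℕ):ℝ) = (((r*k).choose (r*k - V r):ℕ):ℝ) *
            (((r:ℝ)*(k:ℝ))^(r*k - V r) * ((r:ℝ)*(k:ℝ)+(n:ℝ))^(V r)) * ((n:ℝ)^k)^(M-r) := by
          rw [hBB]
          simp only
          rw [hNsub]
          push_cast
          ring
        have htotcast : ((total:ℕ):ℝ) = ((n:ℝ)^k)^M := by
          rw [htotal]
          push_cast
          ring
        calc ((M.choose r * BB r : ℕ) : ℝ) = ((M.choose r:ℕ):ℝ) * ((BB r:ℕ):ℝ) := by push_cast; ring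
        _ = (((M.choose r:ℕ):ℝ) * ((((r*k).choose (r*k - V r):ℕ):ℝ) *
              (((r:ℝ)*(k:ℝ))^(r*k - V r) * ((r:ℝ)*(k:ℝ)+(n:ℝ))^(V r)))) * ((n:ℝ)^k)^(M-r) := by
            rw [hBBcast]
            ring
        _ ≤ ((K*(n:ℝ)^(-δ))^r * ((n:ℝ)^k)^r) * ((n:ℝ)^k)^(M-r) := by
            apply mul_le_mul_of_nonneg_right hcore (by positivity)
        _ = (K*(n:ℝ)^(-δ))^r * total := by
            rw [htotcast, ← htsplit]
            ring
      -- sum up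
      have hy0 : (0:ℝ) ≤ K*(n:ℝ)^(-δ) := by positivity
      calc (bad.card : ℝ) ≤ ((∑ r ∈ Finset.Icc 1 R, (M.choose r) * BB r : ℕ) : ℝ) := by
            exact_mod_cast hcardbound
      _ = ∑ r ∈ Finset.Icc 1 R, ((M.choose r * BB r : ℕ) : ℝ) := by
            push_cast
            rfl
      _ ≤ ∑ r ∈ Finset.Icc 1 R, (K*(n:ℝ)^(-δ))^r * total := Finset.sum_le_sum hperR
      _ = (∑ r ∈ Finset.Icc 1 R, (K*(n:ℝ)^(-δ))^r) * total := by rw [Finset.sum_mul]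
      _ ≤ (2*(K*(n:ℝ)^(-δ))) * total := by
            apply mul_le_mul_of_nonneg_right _ (le_of_lt htotpos)
            exact geom_sum_half hy0 hev3n R
      _ = 2*K*(n:ℝ)^(-δ) * total := by ring
    -- conclude the lower bound on the ratio
    rw [hnum]
    have h1 : ((Finset.univ.filter P).card : ℝ) = (total:ℝ) - bad.card := by
      have := hsplit
      have h2 : ((Finset.univ.filter P).card : ℝ) + bad.card = total := by exact_mod_cast this
      linarith
    rw [h1, sub_div, div_self (ne_of_gt htotpos)]
    have h2 : (bad.card:ℝ)/total ≤ 2*K*(n:ℝ)^(-δ) := by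
      rw [div_le_iff₀ htotpos]
      exact MC
    linarith
  · -- ratio ≤ 1
    filter_upwards [eventually_ge_atTop 1] with n hn
    have hpos : (0:ℝ) < (((n^k) ^ ⌊(n : ℝ) ^ β'⌋₊ : ℕ) : ℝ) := by
      have : 0 < (n^k) ^ ⌊(n : ℝ) ^ β'⌋₊ := Nat.pow_pos (Nat.pow_pos hn)
      exact_mod_cast this
    rw [div_le_one hpos]
    have hcard : Nat.card {S : Fin ⌊(n : ℝ) ^ β'⌋₊ → Fin k → Fin n //
        ∀ T : Finset (Fin ⌊(n : ℝ) ^ β'⌋₊),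
          (T.card : ℝ) ≤ (n : ℝ) ^ α' →
            ee * T.card ≤ ((T.biUnion fun c =>
              Finset.image (S c) Finset.univ).card : ℝ)} ≤ (n^k) ^ ⌊(n : ℝ) ^ β'⌋₊ := by
      rw [Nat.card_eq_fintype_card]
      calc Fintype.card _ ≤ Fintype.card (Fin ⌊(n : ℝ) ^ β'⌋₊ → Fin k → Fin n) :=
            Fintype.card_subtype_le _
      _ = (n^k) ^ ⌊(n : ℝ) ^ β'⌋₊ := by
            rw [Fintype.card_fun, Fintype.card_fun, Fintype.card_fin, Fintype.card_fin,
              Fintype.card_fin]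
    exact_mod_cast hcard
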